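/- For every n ∈ S and every u ∈ ℝ, the variance of the third-order chaotic projection of the excursion area satisfies the exact identity Var((γ₃(u)/3!)·∫_𝕋 H₃(f_n(x)) dx) = (γ₃(u)²/3!)·|S₃(n)|/N_n³, where γ₃(u) := H₂(u)·φ(u) = (u² − 1)·φ(u) and H₃(t) = t³ − 3t is the third probabilists' Hermite polynomial. In particular this variance is at most C/N_n² for an absolute constant C > 0. -/

import Mathlib

open MeasureTheory ProbabilityTheory Real

noncomputable section

/-- A point of the plane `ℝ²` (with the Euclidean metric); the torus `𝕋 = ℝ²/ℤ²` is
realized through the fundamental domain `[0,1)²`. -/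
abbrev Pt := EuclideanSpace ℝ (Fin 2)

/-- The set `Λ_n` of lattice points on the circle of radius `√n`. -/
def Lam (n : ℕ) : Finset (ℤ × ℤ) :=
  (Finset.Icc (-(n : ℤ), -(n : ℤ)) ((n : ℤ), (n : ℤ))).filter
    fun l => l.1 ^ 2 + l.2 ^ 2 = (n : ℤ)

/-- The half frequency set `Λ_n⁺`: points with positive second coordinate, together with
`(√n, 0)` when `n` is a perfect square. -/
def LamPlus (n : ℕ) : Finset (ℤ × ℤ) :=
  (Lam n).filter fun l => 0 < l.2 ∨ (l.2 = 0 ∧ 0 < l.1)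

/-- The spectral multiplicity `N_n = |Λ_n|`. -/
def Nn (n : ℕ) : ℕ := (Lam n).card

/-- The energy level `E_n = 4π²n`. -/
def En (n : ℕ) : ℝ := 4 * Real.pi ^ 2 * n

/-- The character `x ↦ e^{2πi⟨λ,x⟩}`. -/
def eChar (l : ℤ × ℤ) (x : Pt) : ℂ :=
  Complex.exp (2 * Real.pi * Complex.I * ((l.1 : ℂ) * (x 0 : ℝ) + (l.2 : ℂ) * (x 1 : ℝ)))

/-- The complex-valued random wave `N_n^{-1/2} ∑_{λ ∈ Λ_n} a_λ e^{2πi⟨λ,x⟩}`. -/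
def Fwave (n : ℕ) {Ω : Type*} (a : ℤ × ℤ → Ω → ℂ) (ω : Ω) (x : Pt) : ℂ :=
  ((Real.sqrt (Nn n) : ℂ))⁻¹ * ∑ l ∈ Lam n, a l ω * eChar l x

/-- The arithmetic random wave `f_n` (the real part of the complex wave; under the
hermitian symmetry `a_{-λ} = conj a_λ` the wave is real-valued). -/
def fwave (n : ℕ) {Ω : Type*} (a : ℤ × ℤ → Ω → ℂ) (ω : Ω) (x : Pt) : ℝ :=
  (Fwave n a ω x).re

/-- Fundamental domain `[0,1)²` of the torus `𝕋 = ℝ²/ℤ²`. -/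
def box : Set Pt := {x | x 0 ∈ Set.Ico (0 : ℝ) 1 ∧ x 1 ∈ Set.Ico (0 : ℝ) 1}

/-- The excursion area `L₂(u) = vol{x ∈ 𝕋 : f(x) ≥ u}`. -/
def excArea (f : Pt → ℝ) (u : ℝ) : ℝ :=
  (volume {x ∈ box | u ≤ f x}).toReal

/-- Half the length (1-dim Hausdorff measure) of the level set `{f = u}` of the torus:
the Lipschitz–Killing curvature `L₁(u)`. -/
def levelLen (f : Pt → ℝ) (u : ℝ) : ℝ :=
  (μH[1] {x ∈ box | f x = u}).toReal / 2

/-- Standard Gaussian cumulative distribution function `Φ`. -/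
def Phi (u : ℝ) : ℝ := ((gaussianReal 0 1) (Set.Iic u)).toReal

/-- Standard Gaussian density `φ`. -/
def phi (u : ℝ) : ℝ := (Real.sqrt (2 * Real.pi))⁻¹ * Real.exp (-u ^ 2 / 2)

/-- The hypotheses on the random coefficients `(a_λ)` of an arithmetic random wave:
measurability; hermitian symmetry `a_{-λ} = conj a_λ`; real and imaginary parts are
centered Gaussians of variance `1/2`, independent of each other; and the coefficients
indexed by `Λ_n⁺` are mutually independent. -/
def ARW (n : ℕ) {Ω : Type*} [MeasureSpace Ω] (a : ℤ × ℤ → Ω → ℂ) : Prop :=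
  (∀ l, Measurable (a l)) ∧
  (∀ l ∈ Lam n, ∀ ω, a (-l) ω = (starRingEnd ℂ) (a l ω)) ∧
  (∀ l ∈ Lam n, Measure.map (fun ω => (a l ω).re) volume = gaussianReal 0 (1 / 2)) ∧
  (∀ l ∈ Lam n, Measure.map (fun ω => (a l ω).im) volume = gaussianReal 0 (1 / 2)) ∧
  (∀ l ∈ Lam n, IndepFun (fun ω => (a l ω).re) (fun ω => (a l ω).im) volume) ∧
  iIndepFun
    (fun (l : LamPlus n) ω => a l.1 ω) volume

/-- The membership `n ∈ S`: `n` is a sum of two squares. -/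
def memS (n : ℕ) : Prop := ∃ p q : ℤ, (n : ℤ) = p ^ 2 + q ^ 2

end

open MeasureTheory ProbabilityTheory

noncomputable section

/-- The `q`-th probabilists' Hermite polynomial, evaluated at a real number. -/
def Hq (q : ℕ) (t : ℝ) : ℝ := Polynomial.aeval t (Polynomial.hermite q)

/-- The length-3 spectral correlation set
`S₃(n) = {(λ, λ', λ'') ∈ Λ_n³ : λ + λ' + λ'' = 0}`. -/
def S3 (n : ℕ) : Finset ((ℤ × ℤ) × (ℤ × ℤ) × (ℤ × ℤ)) :=
  ((Lam n) ×ˢ (Lam n) ×ˢ (Lam n)).filter fun t => t.1 + t.2.1 + t.2.2 = 0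

end

-- ===== auxiliary lemmas =====

section Aux

open MeasureTheory ProbabilityTheory

noncomputable def torusEquiv : Pt ≃ᵐ ℝ × ℝ :=
  (MeasurableEquiv.toLp 2 (Fin 2 → ℝ)).symm.trans MeasurableEquiv.finTwoArrow

lemma torusEquiv_apply (x : Pt) : torusEquiv x = (x 0, x 1) := rfl

lemma torusEquiv_mp : MeasurePreserving torusEquiv volume volume :=
  (volume_preserving_finTwoArrow ℝ).comp (EuclideanSpace.volume_preserving_symm_measurableEquiv_toLp (Fin 2))

lemma box_eq : box = torusEquiv ⁻¹' (Set.Ico (0:ℝ) 1 ×ˢ Set.Ico (0:ℝ) 1) := by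
  ext x; simp [box, torusEquiv_apply, Set.mem_prod]

lemma box_volume : volume box = 1 := by
  rw [box_eq, torusEquiv_mp.measure_preimage
    ((measurableSet_Ico.prod measurableSet_Ico)).nullMeasurableSet]
  rw [Measure.volume_eq_prod, Measure.prod_prod, Real.volume_Ico]
  simp

lemma integral_exp_Ico (k : ℤ) (hk : k ≠ 0) :
    ∫ t in Set.Ico (0:ℝ) 1, Complex.exp (2*(Real.pi:ℂ)*Complex.I*(k:ℂ)*(t:ℂ)) = 0 := by
  rw [Measure.restrict_congr_set Ico_ae_eq_Ioc, ← intervalIntegral.integral_of_le zero_le_one]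
  have hc : (2*(Real.pi:ℂ)*Complex.I*(k:ℂ)) ≠ 0 := by
    simp [Real.pi_ne_zero, Complex.I_ne_zero, hk]
  rw [integral_exp_mul_complex hc]
  have h1 : Complex.exp (2*(Real.pi:ℂ)*Complex.I*(k:ℂ) * ((1:ℝ):ℂ)) = 1 := by
    rw [show 2*(Real.pi:ℂ)*Complex.I*(k:ℂ) * ((1:ℝ):ℂ) = (k:ℂ) * (2*(Real.pi:ℂ)*Complex.I) by
      push_cast; ring]
    exact Complex.exp_int_mul_two_pi_mul_I k
  have h0 : Complex.exp (2*(Real.pi:ℂ)*Complex.I*(k:ℂ) * ((0:ℝ):ℂ)) = 1 := by simp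
  rw [h1, h0]; simp

lemma integral_box (f g : ℝ → ℂ) :
    ∫ x in box, f (x 0) * g (x 1) =
      (∫ t in Set.Ico (0:ℝ) 1, f t) * (∫ t in Set.Ico (0:ℝ) 1, g t) := by
  have h := torusEquiv_mp.setIntegral_preimage_emb torusEquiv.measurableEmbedding
    (fun p : ℝ × ℝ => f p.1 * g p.2) (Set.Ico (0:ℝ) 1 ×ˢ Set.Ico (0:ℝ) 1)
  rw [box_eq]
  calc ∫ x in torusEquiv ⁻¹' (Set.Ico (0:ℝ) 1 ×ˢ Set.Ico (0:ℝ) 1), f (x 0) * g (x 1)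
      = ∫ p in Set.Ico (0:ℝ) 1 ×ˢ Set.Ico (0:ℝ) 1, f p.1 * g p.2 := h
    _ = _ := by rw [Measure.volume_eq_prod]; exact setIntegral_prod_mul f g _ _

lemma integral_eChar (l : ℤ × ℤ) (hl : l ≠ 0) : ∫ x in box, eChar l x = 0 := by
  have hpt : ∀ x : Pt, eChar l x =
      Complex.exp (2*(Real.pi:ℂ)*Complex.I*(l.1:ℂ)*((x 0 : ℝ):ℂ)) *
      Complex.exp (2*(Real.pi:ℂ)*Complex.I*(l.2:ℂ)*((x 1 : ℝ):ℂ)) := by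
    intro x; rw [eChar, ← Complex.exp_add]; congr 1; ring
  rw [integral_congr_ae (Filter.Eventually.of_forall hpt),
    integral_box (fun t => Complex.exp (2*(Real.pi:ℂ)*Complex.I*(l.1:ℂ)*(t:ℂ)))
      (fun t => Complex.exp (2*(Real.pi:ℂ)*Complex.I*(l.2:ℂ)*(t:ℂ)))]
  have hl2 : l.1 ≠ 0 ∨ l.2 ≠ 0 := by
    by_contra hc; push_neg at hc; exact hl (Prod.ext hc.1 hc.2)
  rcases hl2 with h | h
  · rw [integral_exp_Ico _ h, zero_mul]
  · rw [integral_exp_Ico _ h, mul_zero]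

lemma eChar_norm (l : ℤ × ℤ) (x : Pt) : ‖eChar l x‖ = 1 := by
  have h : eChar l x = Complex.exp
      (((2*Real.pi*((l.1:ℝ)*(x 0)+(l.2:ℝ)*(x 1)) : ℝ):ℂ) * Complex.I) := by
    rw [eChar]; congr 1; push_cast; ring
  rw [h, Complex.norm_exp_ofReal_mul_I]

lemma eChar_measurable (l : ℤ × ℤ) : Measurable fun x : Pt => eChar l x := by
  unfold eChar; fun_prop

lemma integrableOn_mul_eChar (c : ℂ) (l : ℤ × ℤ) :
    IntegrableOn (fun x => c * eChar l x) box volume := by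
  refine Integrable.mono' (g := fun _ => ‖c‖) ?_ ?_ ?_
  · exact integrableOn_const (by rw [box_volume]; exact ENNReal.one_ne_top)
  · exact ((eChar_measurable l).const_mul c).aestronglyMeasurable
  · exact Filter.Eventually.of_forall fun x => by rw [norm_mul, eChar_norm, mul_one]

lemma eChar_add (l m : ℤ × ℤ) (x : Pt) : eChar l x * eChar m x = eChar (l + m) x := by
  rw [eChar, eChar, eChar, ← Complex.exp_add]; congr 1
  push_cast [Prod.fst_add, Prod.snd_add]; ring

lemma eChar_conj (l : ℤ × ℤ) (x : Pt) :
    (starRingEnd ℂ) (eChar l x) = eChar (-l) x := by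
  rw [eChar, eChar, ← Complex.exp_conj]; congr 1
  simp only [map_mul, map_add, Complex.conj_I, Complex.conj_ofReal, map_intCast,
    map_ofNat, Prod.fst_neg, Prod.snd_neg, Int.cast_neg]
  ring

lemma mem_Lam_sq {n : ℕ} {l : ℤ × ℤ} (h : l ∈ Lam n) : l.1 ^ 2 + l.2 ^ 2 = (n : ℤ) :=
  (Finset.mem_filter.mp h).2

lemma mem_Lam_ne_zero {n : ℕ} (hn : n ≠ 0) {l : ℤ × ℤ} (h : l ∈ Lam n) : l ≠ 0 := by
  rintro rfl
  have h2 := mem_Lam_sq h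
  simp at h2
  exact hn (by exact_mod_cast h2.symm)

lemma neg_mem_Lam {n : ℕ} {l : ℤ × ℤ} (h : l ∈ Lam n) : -l ∈ Lam n := by
  simp only [Lam, Finset.mem_filter, Finset.mem_Icc, Prod.le_def, Prod.fst_neg,
    Prod.snd_neg] at h ⊢
  refine ⟨⟨⟨?_, ?_⟩, ?_, ?_⟩, ?_⟩ <;> try omega
  linear_combination h.2

lemma sq_eq_three_sq {m e : ℤ} (h : m ^ 2 = 3 * e ^ 2) : e = 0 := by
  by_contra he
  have h3 : Irrational (Real.sqrt 3) := by
    simpa using (Nat.prime_three).irrational_sqrt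
  apply h3
  refine ⟨(m.natAbs : ℚ) / (e.natAbs : ℚ), ?_⟩
  have he' : ((e.natAbs : ℝ)) ≠ 0 := by
    simp only [ne_eq, Nat.cast_eq_zero, Int.natAbs_eq_zero]; exact he
  have h1 : ((m.natAbs : ℝ)) ^ 2 = ((m : ℝ)) ^ 2 := by
    rw [Nat.cast_natAbs]; simp [Int.cast_abs, sq_abs]
  have h2 : ((e.natAbs : ℝ)) ^ 2 = ((e : ℝ)) ^ 2 := by
    rw [Nat.cast_natAbs]; simp [Int.cast_abs, sq_abs]
  have hx : ((m.natAbs : ℝ) / (e.natAbs : ℝ)) ^ 2 = 3 := by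
    rw [div_pow, div_eq_iff (by positivity), h1, h2]
    exact_mod_cast h
  have hnn : (0:ℝ) ≤ (m.natAbs : ℝ) / (e.natAbs : ℝ) := by positivity
  push_cast
  rw [show (3:ℝ) = ((m.natAbs : ℝ) / (e.natAbs : ℝ))^2 from hx.symm, Real.sqrt_sq hnn]

lemma S3_eq_empty {n : ℕ} (hn : n ≠ 0) : S3 n = ∅ := by
  rw [Finset.eq_empty_iff_forall_notMem]
  rintro ⟨⟨a, b⟩, ⟨c, d⟩, ⟨p, q⟩⟩ ht
  simp only [S3, Finset.mem_filter, Finset.mem_product] at ht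
  obtain ⟨⟨h1, h2, h3⟩, hsum⟩ := ht
  have e1 : a ^ 2 + b ^ 2 = (n : ℤ) := mem_Lam_sq h1
  have e2 : c ^ 2 + d ^ 2 = (n : ℤ) := mem_Lam_sq h2
  have e3' : p ^ 2 + q ^ 2 = (n : ℤ) := mem_Lam_sq h3
  have hs1 : a + c + p = 0 := congrArg Prod.fst hsum
  have hs2 : b + d + q = 0 := congrArg Prod.snd hsum
  have hp : p = -(a + c) := by omega
  have hq : q = -(b + d) := by omega
  subst hp hq
  have e3 : (a + c) ^ 2 + (b + d) ^ 2 = (n : ℤ) := by linear_combination e3'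
  have h4 : 2 * (a * c + b * d) = -(n : ℤ) := by linear_combination e3 - e1 - e2
  have h5 : (2 * (a * d - b * c)) ^ 2 = 3 * (n : ℤ) ^ 2 := by
    linear_combination (4 * (c ^ 2 + d ^ 2)) * e1 + 4 * (n : ℤ) * e2 +
      ((n : ℤ) - 2 * (a * c + b * d)) * h4
  exact hn (by exact_mod_cast sq_eq_three_sq h5)

lemma hermite_three : Polynomial.hermite 3 = Polynomial.X ^ 3 - 3 * Polynomial.X := by
  have h2 : Polynomial.hermite 2 = Polynomial.X ^ 2 - 1 := by
    show Polynomial.hermite (1 + 1) = _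
    rw [Polynomial.hermite_succ, Polynomial.hermite_one, Polynomial.derivative_X]
    ring
  show Polynomial.hermite (2 + 1) = _
  rw [Polynomial.hermite_succ, h2]
  simp only [Polynomial.derivative_sub, Polynomial.derivative_one, Polynomial.derivative_X_pow,
    Polynomial.C_eq_intCast, Polynomial.C_eq_natCast]
  push_cast
  ring

lemma Hq_three (t : ℝ) : Hq 3 t = t ^ 3 - 3 * t := by
  rw [Hq, hermite_three]
  simp only [map_sub, map_pow, map_mul, Polynomial.aeval_X, map_ofNat]

lemma zero_mem_Lam_zero : ((0, 0) : ℤ × ℤ) ∈ Lam 0 := by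
  simp [Lam, Finset.mem_filter, Finset.mem_Icc, Prod.le_def]

lemma gaussian_ne_dirac : gaussianReal 0 (1/2) ≠ Measure.dirac (0:ℝ) := by
  intro h
  have h1 : gaussianReal 0 (1/2) {(0:ℝ)} = 0 := by
    rw [gaussianReal_of_var_ne_zero _ (by norm_num : (1/2 : NNReal) ≠ 0),
      withDensity_apply _ (measurableSet_singleton 0),
      Measure.restrict_eq_zero.mpr (measure_singleton 0), lintegral_zero_measure]
  rw [h, Measure.dirac_apply_of_mem (Set.mem_singleton 0)] at h1
  exact one_ne_zero h1

lemma arw_zero_absurd {Ω : Type} [MeasureSpace Ω] [IsProbabilityMeasure (volume : Measure Ω)]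
    (a : ℤ × ℤ → Ω → ℂ)
    (hherm : ∀ l ∈ Lam 0, ∀ ω, a (-l) ω = (starRingEnd ℂ) (a l ω))
    (him : ∀ l ∈ Lam 0, Measure.map (fun ω => (a l ω).im) volume = gaussianReal 0 (1/2)) :
    False := by
  have h0 := him _ zero_mem_Lam_zero
  have hconst : (fun ω => (a (0,0) ω).im) = fun _ => (0:ℝ) := by
    funext ω
    have hh := hherm _ zero_mem_Lam_zero ω
    rw [show -((0,0) : ℤ×ℤ) = ((0,0):ℤ×ℤ) by simp] at hh
    exact Complex.conj_eq_iff_im.mp hh.symm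
  rw [hconst] at h0
  rw [Measure.map_const, measure_univ, one_smul] at h0
  exact gaussian_ne_dirac h0.symm

lemma Fwave_conj {Ω : Type*} {n : ℕ} {a : ℤ × ℤ → Ω → ℂ}
    (hherm : ∀ l ∈ Lam n, ∀ ω, a (-l) ω = (starRingEnd ℂ) (a l ω)) (ω : Ω) (x : Pt) :
    (starRingEnd ℂ) (Fwave n a ω x) = Fwave n a ω x := by
  unfold Fwave
  rw [map_mul, map_inv₀, Complex.conj_ofReal, map_sum]
  congr 1
  refine Finset.sum_equiv (Equiv.neg (ℤ × ℤ)) (fun l => ?_) (fun l hl => ?_)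
  · constructor
    · intro h; exact neg_mem_Lam h
    · intro h; simpa using neg_mem_Lam h
  · rw [map_mul, eChar_conj, ← hherm l hl ω]
    simp [Equiv.neg_apply]

lemma integral_H3_zero {Ω : Type*} [MeasureSpace Ω] {n : ℕ} (hn : n ≠ 0)
    {a : ℤ × ℤ → Ω → ℂ}
    (hherm : ∀ l ∈ Lam n, ∀ ω, a (-l) ω = (starRingEnd ℂ) (a l ω)) (ω : Ω) :
    ∫ x in box, Hq 3 (fwave n a ω x) = 0 := by
  set c : ℂ := (((Real.sqrt (Nn n)) : ℝ) : ℂ)⁻¹ with hc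
  have hexp : ∀ x : Pt, Fwave n a ω x = ∑ l ∈ Lam n, (c * a l ω) * eChar l x := by
    intro x
    rw [Fwave, Finset.mul_sum]
    exact Finset.sum_congr rfl fun l _ => by ring
  have hint1 : ∀ (co : ℂ) (l : ℤ × ℤ), IntegrableOn (fun x => co * eChar l x) box volume :=
    fun co l => integrableOn_mul_eChar co l
  have hFint : IntegrableOn (fun x => Fwave n a ω x) box volume := by
    rw [show (fun x => Fwave n a ω x) = fun x => ∑ l ∈ Lam n, (c * a l ω) * eChar l x from
      funext hexp]
    exact integrable_finset_sum _ fun l _ => hint1 _ l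
  have hIF : ∫ x in box, Fwave n a ω x = 0 := by
    rw [integral_congr_ae (Filter.Eventually.of_forall hexp),
      integral_finset_sum _ fun l _ => hint1 _ l]
    refine Finset.sum_eq_zero fun l hl => ?_
    rw [integral_const_mul, integral_eChar l (mem_Lam_ne_zero hn hl), mul_zero]
  have hcube : ∀ x : Pt, (Fwave n a ω x)^3 =
      ∑ l ∈ Lam n, ∑ l' ∈ Lam n, ∑ l'' ∈ Lam n,
        ((c * a l ω) * (c * a l' ω) * (c * a l'' ω)) * eChar (l + l' + l'') x := by
    intro x
    rw [show (Fwave n a ω x)^3 = Fwave n a ω x * Fwave n a ω x * Fwave n a ω x by ring,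
      hexp, Finset.sum_mul_sum, Finset.sum_mul]
    refine Finset.sum_congr rfl fun l _ => ?_
    rw [Finset.sum_mul]
    refine Finset.sum_congr rfl fun l' _ => ?_
    rw [Finset.mul_sum]
    refine Finset.sum_congr rfl fun l'' _ => ?_
    rw [show eChar (l + l' + l'') x = eChar l x * eChar l' x * eChar l'' x by
      rw [eChar_add, eChar_add]]
    ring
  have hcubeint : IntegrableOn (fun x => (Fwave n a ω x)^3) box volume := by
    rw [show (fun x => (Fwave n a ω x)^3) = fun x => ∑ l ∈ Lam n, ∑ l' ∈ Lam n, ∑ l'' ∈ Lam n,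
        ((c * a l ω) * (c * a l' ω) * (c * a l'' ω)) * eChar (l + l' + l'') x from
      funext hcube]
    exact integrable_finset_sum _ fun l _ => integrable_finset_sum _ fun l' _ =>
      integrable_finset_sum _ fun l'' _ => hint1 _ _
  have hsum_ne : ∀ l ∈ Lam n, ∀ l' ∈ Lam n, ∀ l'' ∈ Lam n, l + l' + l'' ≠ 0 := by
    intro l hl l' hl' l'' hl'' h0
    have hmem : (l, l', l'') ∈ S3 n := by
      simp only [S3, Finset.mem_filter, Finset.mem_product]
      exact ⟨⟨hl, hl', hl''⟩, h0⟩
    rw [S3_eq_empty hn] at hmem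
    exact Finset.notMem_empty _ hmem
  have hIF3 : ∫ x in box, (Fwave n a ω x)^3 = 0 := by
    rw [integral_congr_ae (Filter.Eventually.of_forall hcube),
      integral_finset_sum _ (fun l _ => integrable_finset_sum _ fun l' _ =>
        integrable_finset_sum _ fun l'' _ => hint1 _ _)]
    refine Finset.sum_eq_zero fun l hl => ?_
    rw [integral_finset_sum _ (fun l' _ => integrable_finset_sum _ fun l'' _ => hint1 _ _)]
    refine Finset.sum_eq_zero fun l' hl' => ?_
    rw [integral_finset_sum _ (fun l'' _ => hint1 _ _)]
    refine Finset.sum_eq_zero fun l'' hl'' => ?_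
    rw [integral_const_mul, integral_eChar _ (hsum_ne l hl l' hl' l'' hl''), mul_zero]
  have hGint : ∫ x in box, ((Fwave n a ω x)^3 - 3 * Fwave n a ω x) = 0 := by
    rw [integral_sub hcubeint (hFint.const_mul 3), hIF3, integral_const_mul, hIF]
    simp
  have hptwise : ∀ x : Pt, ((Hq 3 (fwave n a ω x) : ℝ) : ℂ) =
      (Fwave n a ω x)^3 - 3 * Fwave n a ω x := by
    intro x
    have him : (Fwave n a ω x).im = 0 := Complex.conj_eq_iff_im.mp (Fwave_conj hherm ω x)
    have hz : Fwave n a ω x = ((fwave n a ω x : ℝ) : ℂ) := by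
      rw [fwave]; apply Complex.ext <;> simp [him]
    rw [Hq_three, hz]; push_cast; ring
  have hfin : ((∫ x in box, Hq 3 (fwave n a ω x) : ℝ) : ℂ) = 0 := by
    calc ((∫ x in box, Hq 3 (fwave n a ω x) : ℝ) : ℂ)
        = ∫ x in box, ((Hq 3 (fwave n a ω x) : ℝ) : ℂ) := integral_ofReal.symm
      _ = ∫ x in box, ((Fwave n a ω x)^3 - 3 * Fwave n a ω x) :=
          integral_congr_ae (Filter.Eventually.of_forall hptwise)
      _ = 0 := hGint
  exact_mod_cast hfin

end Aux

/-- For every `n ∈ S` and `u ∈ ℝ`,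
`Var((γ₃(u)/3!)·∫_𝕋 H₃(f_n)) = (γ₃(u)²/3!)·|S₃(n)|/N_n³` where `γ₃(u) = H₂(u)φ(u)`,
and this variance is at most `C/N_n²` for an absolute constant `C > 0`. -/
theorem arw_third_chaos_variance :
    ∃ C : ℝ, 0 < C ∧
      ∀ (Ω : Type) [MeasureSpace Ω] [IsProbabilityMeasure (volume : Measure Ω)],
        ∀ (n : ℕ), memS n → ∀ (a : ℤ × ℤ → Ω → ℂ), ARW n a → ∀ u : ℝ,
          variance (fun ω =>
              Hq 2 u * phi u / 6 * ∫ x in box, Hq 3 (fwave n a ω x)) volume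
            = (Hq 2 u * phi u) ^ 2 / 6 * ((S3 n).card : ℝ) / (Nn n : ℝ) ^ 3 ∧
          variance (fun ω =>
              Hq 2 u * phi u / 6 * ∫ x in box, Hq 3 (fwave n a ω x)) volume
            ≤ C / (Nn n : ℝ) ^ 2 := by
  refine ⟨1, one_pos, ?_⟩
  intro Ω _ _ n hS a hARW u
  rcases Nat.eq_zero_or_pos n with rfl | hn
  · exact absurd hARW (fun h => arw_zero_absurd a h.2.1 h.2.2.2.1)
  · have hn' : n ≠ 0 := hn.ne'
    have hzero : ∀ ω : Ω, (∫ x in box, Hq 3 (fwave n a ω x)) = 0 :=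
      fun ω => integral_H3_zero hn' hARW.2.1 ω
    have hXeq : (fun ω : Ω => Hq 2 u * phi u / 6 * ∫ x in box, Hq 3 (fwave n a ω x)) =
        fun _ => (0:ℝ) := funext fun ω => by rw [hzero ω]; ring
    have hvar : variance (fun ω : Ω =>
        Hq 2 u * phi u / 6 * ∫ x in box, Hq 3 (fwave n a ω x)) volume = 0 := by
      rw [hXeq]; exact variance_zero volume
    constructor
    · rw [hvar, S3_eq_empty hn']
      simp
    · rw [hvar]
      positivity
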